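/- If d = deg gcd(f(x), φ(x)) and r = min{m, n−d}, then the rank of the generalized ideal matrix H*(f)_{n×m} equals r. -/
import Mathlib


open Polynomial Matrix

/-- The rotation matrix `H_φ` of a monic polynomial
`φ(x) = xⁿ − φ_{n-1}x^{n-1} − ⋯ − φ₁x − φ₀` (note `φᵢ = -(coeff φ i)` for `i < n`). -/
def rotMat (n : ℕ) (φ : Polynomial ℂ) : Matrix (Fin n) (Fin n) ℂ :=
  Matrix.of fun i j =>
    if (j : ℕ) + 1 < n then (if (i : ℕ) = (j : ℕ) + 1 then 1 else 0)
    else -φ.coeff (i : ℕ)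

/-- The `n × m` generalized ideal matrix `H*(f) = [f, Hf, H²f, …, H^{m-1}f]`. -/
noncomputable def genIdealMat (n m : ℕ) (H : Matrix (Fin n) (Fin n) ℂ) (f : Fin n → ℂ) :
    Matrix (Fin n) (Fin m) ℂ :=
  Matrix.of fun i j => (H ^ (j : ℕ)).mulVec f i

/-- The polynomial `f(x) = Σ_{j=0}^{n-1} fⱼ xʲ` associated to a vector `f`. -/
noncomputable def vecPoly (n : ℕ) (f : Fin n → ℂ) : Polynomial ℂ :=
  ∑ j : Fin n, Polynomial.C (f j) * Polynomial.X ^ (j : ℕ)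

lemma vecPoly_coeff (n : ℕ) (f : Fin n → ℂ) (k : ℕ) :
    (vecPoly n f).coeff k = if h : k < n then f ⟨k, h⟩ else 0 := by
  classical
  rw [vecPoly, Polynomial.finset_sum_coeff]
  simp only [Polynomial.coeff_C_mul, Polynomial.coeff_X_pow, mul_ite, mul_one, mul_zero]
  split
  · next h =>
    rw [Finset.sum_eq_single (⟨k, h⟩ : Fin n)]
    · simp
    · intro b _ hb
      simp only [ite_eq_right_iff]
      intro hkb; exact absurd (Fin.ext hkb.symm) hb
    · simp
  · next h =>
    apply Finset.sum_eq_zero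
    intro j _
    simp only [ite_eq_right_iff]
    intro hkj; exact absurd (hkj ▸ j.isLt) h

lemma vecPoly_natDegree_lt (n : ℕ) (hn : 0 < n) (f : Fin n → ℂ) :
    (vecPoly n f).natDegree < n := by
  by_cases h : vecPoly n f = 0
  · simpa [h]
  · by_contra hlt
    push_neg at hlt
    have h2 : (vecPoly n f).coeff (vecPoly n f).natDegree ≠ 0 := by
      rw [← Polynomial.leadingCoeff]
      exact Polynomial.leadingCoeff_ne_zero.mpr h
    rw [vecPoly_coeff, dif_neg (not_lt.2 hlt)] at h2
    exact h2 rfl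

lemma vecPoly_eq_zero (n : ℕ) (f : Fin n → ℂ) (h : vecPoly n f = 0) : f = 0 := by
  funext j
  have h2 := congrArg (fun p => Polynomial.coeff p (j : ℕ)) h
  simp only [vecPoly_coeff, Polynomial.coeff_zero, dif_pos j.isLt, Fin.eta] at h2
  exact h2

lemma vecPoly_of_coeff (m : ℕ) (p : Polynomial ℂ) (hp : p.natDegree < m) :
    vecPoly m (fun i : Fin m => p.coeff (i : ℕ)) = p := by
  ext k
  rw [vecPoly_coeff]
  split
  · rfl
  · next h =>
    exact (Polynomial.coeff_eq_zero_of_natDegree_lt (by omega)).symm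

/-- `vecPoly` as a linear map. -/
noncomputable def vecPolyₗ (n : ℕ) : (Fin n → ℂ) →ₗ[ℂ] Polynomial ℂ where
  toFun f := vecPoly n f
  map_add' a b := by
    simp [vecPoly, map_add, add_mul, Finset.sum_add_distrib]
  map_smul' c a := by
    simp [vecPoly, Polynomial.smul_eq_C_mul, Finset.mul_sum, mul_assoc]

lemma rotMat_mulVec_apply (n : ℕ) (φ : Polynomial ℂ) (v : Fin n → ℂ) (i : Fin n) :
    (rotMat n φ).mulVec v i =
      (if h : 1 ≤ (i : ℕ) then v ⟨(i : ℕ) - 1, by omega⟩ else 0)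
        - φ.coeff (i : ℕ) * v ⟨n - 1, Nat.sub_lt i.pos Nat.one_pos⟩ := by
  have hn : 0 < n := i.pos
  classical
  rw [Matrix.mulVec, dotProduct,
    ← Finset.sum_erase_add _ _ (Finset.mem_univ (⟨n - 1, Nat.sub_lt i.pos Nat.one_pos⟩ : Fin n))]
  have hlast : rotMat n φ i ⟨n - 1, Nat.sub_lt i.pos Nat.one_pos⟩
      * v ⟨n - 1, Nat.sub_lt i.pos Nat.one_pos⟩
      = -(φ.coeff (i : ℕ) * v ⟨n - 1, Nat.sub_lt i.pos Nat.one_pos⟩) := by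
    rw [rotMat, Matrix.of_apply, if_neg (by simp only [Fin.val_mk]; omega), neg_mul]
  rw [hlast]
  have hsum : ∑ x ∈ Finset.univ.erase (⟨n - 1, Nat.sub_lt i.pos Nat.one_pos⟩ : Fin n),
      rotMat n φ i x * v x = (if h : 1 ≤ (i : ℕ) then v ⟨(i : ℕ) - 1, by omega⟩ else 0) := by
    split
    · next h =>
      rw [Finset.sum_eq_single (⟨(i : ℕ) - 1, by omega⟩ : Fin n)]
      · rw [rotMat, Matrix.of_apply]
        rw [if_pos (show ((⟨(i:ℕ) - 1, by omega⟩ : Fin n) : ℕ) + 1 < n by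
            simp only [Fin.val_mk]; omega),
          if_pos (show (i:ℕ) = ((⟨(i:ℕ) - 1, by omega⟩ : Fin n) : ℕ) + 1 by
            simp only [Fin.val_mk]; omega), one_mul]
      · intro b hb hbne
        have hb1 : (b : ℕ) ≠ n - 1 := by
          intro hc
          exact (Finset.mem_erase.mp hb).1 (Fin.ext hc)
        have hblt : (b : ℕ) < n := b.isLt
        rw [rotMat, Matrix.of_apply, if_pos (by omega), if_neg, zero_mul]
        intro hc
        refine hbne (Fin.ext ?_)
        simp only [Fin.val_mk]
        omega
      · intro hc
        exfalso
        refine hc (Finset.mem_erase.mpr ⟨?_, Finset.mem_univ _⟩)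
        intro hc2
        have hv : (i : ℕ) - 1 = n - 1 := by
          have := congrArg Fin.val hc2
          simpa using this
        have hi := i.isLt
        omega
    · next h =>
      apply Finset.sum_eq_zero
      intro b hb
      have hb1 : (b : ℕ) ≠ n - 1 := by
        intro hc
        exact (Finset.mem_erase.mp hb).1 (Fin.ext hc)
      have hblt : (b : ℕ) < n := b.isLt
      rw [rotMat, Matrix.of_apply, if_pos (by omega), if_neg (by omega), zero_mul]
  rw [hsum]
  ring

lemma vecPoly_rotMat_mulVec (n : ℕ) (hn : 0 < n) (φ : Polynomial ℂ)
    (hmonic : φ.Monic) (hdeg : φ.natDegree = n) (v : Fin n → ℂ) :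
    vecPoly n ((rotMat n φ).mulVec v) =
      X * vecPoly n v - C (v ⟨n - 1, Nat.sub_lt hn Nat.one_pos⟩) * φ := by
  ext k
  rw [vecPoly_coeff, Polynomial.coeff_sub, Polynomial.coeff_C_mul]
  cases k with
  | zero =>
    rw [dif_pos hn, rotMat_mulVec_apply, dif_neg (by simp), Polynomial.mul_coeff_zero,
      Polynomial.coeff_X_zero, zero_mul, zero_sub, zero_sub]
    simp only [Fin.val_mk]
    ring
  | succ k =>
    rw [Polynomial.coeff_X_mul, vecPoly_coeff]
    by_cases hkn : k + 1 < n
    · rw [dif_pos hkn, rotMat_mulVec_apply]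
      simp only [Fin.val_mk]
      rw [dif_pos (by omega), dif_pos (by omega : k < n)]
      have : (⟨k + 1 - 1, by omega⟩ : Fin n) = ⟨k, by omega⟩ := rfl
      rw [this]
      ring
    · rw [dif_neg hkn]
      by_cases hk : k < n
      · have hcoeff : φ.coeff (k + 1) = 1 := by
          have hne : k + 1 = n := by omega
          rw [hne, ← hdeg]
          exact hmonic.coeff_natDegree
        rw [dif_pos hk, hcoeff, mul_one]
        have : (⟨k, hk⟩ : Fin n) = ⟨n - 1, Nat.sub_lt hn Nat.one_pos⟩ := by
          apply Fin.ext; simp only [Fin.val_mk]; omega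
        rw [this, sub_self]
      · rw [dif_neg hk, Polynomial.coeff_eq_zero_of_natDegree_lt (by omega), mul_zero,
          sub_zero]

lemma mk_vecPoly_pow_mulVec (n : ℕ) (hn : 0 < n) (φ : Polynomial ℂ)
    (hmonic : φ.Monic) (hdeg : φ.natDegree = n) (j : ℕ) (v : Fin n → ℂ) :
    AdjoinRoot.mk φ (vecPoly n (((rotMat n φ) ^ j).mulVec v)) =
      AdjoinRoot.root φ ^ j * AdjoinRoot.mk φ (vecPoly n v) := by
  induction j generalizing v with
  | zero => simp [Matrix.one_mulVec]
  | succ j ih =>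
    have hpow : (rotMat n φ) ^ (j + 1) = (rotMat n φ) ^ j * rotMat n φ := pow_succ _ _
    rw [hpow, ← Matrix.mulVec_mulVec, ih, vecPoly_rotMat_mulVec n hn φ hmonic hdeg,
      map_sub, _root_.map_mul, _root_.map_mul, AdjoinRoot.mk_self, mul_zero, sub_zero,
      AdjoinRoot.mk_X, pow_succ]
    ring

/-- If `d = deg gcd(f(x), φ(x))` and `r = min {m, n − d}`, then the rank of the
generalized ideal matrix `H*(f)_{n×m}` equals `r`. -/
theorem genIdealMat_rank (n m : ℕ) (hn : 0 < n) (φ : Polynomial ℂ)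
    (hmonic : φ.Monic) (hdeg : φ.natDegree = n) (h0 : φ.coeff 0 ≠ 0)
    (hsqfree : Squarefree φ) (f : Fin n → ℂ) :
    (genIdealMat n m (rotMat n φ) f).rank =
      min m (n - (EuclideanDomain.gcd (vecPoly n f) φ).natDegree) := by
  classical
  set F := vecPoly n f with hF
  set D := EuclideanDomain.gcd F φ with hDdef
  have hφ0 : φ ≠ 0 := hmonic.ne_zero
  have hD0 : D ≠ 0 := fun h => hφ0 ((EuclideanDomain.gcd_eq_zero_iff.mp h).2)
  set ψ := φ / D with hψdef
  have hDψ : D * ψ = φ :=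
    EuclideanDomain.mul_div_cancel' hD0 (EuclideanDomain.gcd_dvd_right F φ)
  have hψ0 : ψ ≠ 0 := fun h => hφ0 (by rw [← hDψ, h, mul_zero])
  have hdψ : D.natDegree + ψ.natDegree = n := by
    rw [← hdeg, ← hDψ, Polynomial.natDegree_mul hD0 hψ0]
  set s := ψ.natDegree with hsdef
  have hs : n - D.natDegree = s := by omega
  rw [hs]
  -- Bézout: `F/D * A + ψ * B = 1`
  have hFD : D * (F / D) = F :=
    EuclideanDomain.mul_div_cancel' hD0 (EuclideanDomain.gcd_dvd_left F φ)
  have hbez : (F / D) * EuclideanDomain.gcdA F φ + ψ * EuclideanDomain.gcdB F φ = 1 := by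
    apply mul_left_cancel₀ hD0
    rw [mul_one, mul_add, ← mul_assoc, ← mul_assoc, hFD, hDψ,
      ← EuclideanDomain.gcd_eq_gcd_ab]
  -- key divisibility criterion
  have key : ∀ g : Polynomial ℂ, φ ∣ g * F ↔ ψ ∣ g := by
    intro g
    constructor
    · rintro ⟨t, ht⟩
      have h2 : g * (F / D) = ψ * t := by
        apply mul_left_cancel₀ hD0
        calc D * (g * (F / D)) = g * (D * (F / D)) := by ring
          _ = g * F := by rw [hFD]
          _ = φ * t := ht
          _ = D * (ψ * t) := by rw [← hDψ]; ring
      have hg : g = g * ((F / D) * EuclideanDomain.gcdA F φ)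
          + g * (ψ * EuclideanDomain.gcdB F φ) := by
        rw [← mul_add, hbez, mul_one]
      rw [hg]
      refine dvd_add ⟨t * EuclideanDomain.gcdA F φ, ?_⟩ ⟨g * EuclideanDomain.gcdB F φ, by ring⟩
      rw [← mul_assoc, h2]
      ring
    · rintro ⟨h, rfl⟩
      refine ⟨h * (F / D), ?_⟩
      conv_lhs => rw [← hFD]
      rw [← hDψ]
      ring
  -- the linear map `en : ℂⁿ → ℂ[x]/(φ)`
  set en : (Fin n → ℂ) →ₗ[ℂ] AdjoinRoot φ :=
    (Polynomial.aeval (AdjoinRoot.root φ)).toLinearMap.comp (vecPolyₗ n) with hendef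
  have hen : ∀ v : Fin n → ℂ, en v = AdjoinRoot.mk φ (vecPoly n v) := fun v =>
    AdjoinRoot.aeval_eq _
  have hen_inj : Function.Injective en := by
    rw [← LinearMap.ker_eq_bot]
    ext v
    simp only [LinearMap.mem_ker, Submodule.mem_bot]
    constructor
    · intro hv
      rw [hen, AdjoinRoot.mk_eq_zero] at hv
      have hvz : vecPoly n v = 0 := by
        by_contra hc
        have := Polynomial.eq_zero_of_dvd_of_natDegree_lt hv
          (by rw [hdeg]; exact vecPoly_natDegree_lt n hn v)
        exact hc this
      exact vecPoly_eq_zero n v hvz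
    · rintro rfl
      rw [hen]
      show AdjoinRoot.mk φ (vecPoly n 0) = 0
      have : vecPoly n (0 : Fin n → ℂ) = 0 := by simp [vecPoly]
      rw [this, map_zero]
  set A := genIdealMat n m (rotMat n φ) f with hAdef
  set T : (Fin m → ℂ) →ₗ[ℂ] AdjoinRoot φ := en.comp A.mulVecLin with hTdef
  have hT : ∀ c : Fin m → ℂ, T c = AdjoinRoot.mk φ (vecPoly m c * F) := by
    intro c
    have hmv : A.mulVec c = ∑ j : Fin m, c j • ((rotMat n φ) ^ (j : ℕ)).mulVec f := by
      funext i
      rw [Matrix.mulVec, dotProduct, Finset.sum_apply]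
      refine Finset.sum_congr rfl fun j _ => ?_
      simp only [hAdef, genIdealMat, Matrix.of_apply, Pi.smul_apply, smul_eq_mul]
      ring
    have : T c = en (A.mulVec c) := rfl
    rw [this, hmv, map_sum]
    have hterm : ∀ j : Fin m, en (c j • ((rotMat n φ) ^ (j : ℕ)).mulVec f)
        = c j • (AdjoinRoot.root φ ^ (j : ℕ) * AdjoinRoot.mk φ F) := by
      intro j
      rw [_root_.map_smul, hen, mk_vecPoly_pow_mulVec n hn φ hmonic hdeg]
    rw [Finset.sum_congr rfl fun j _ => hterm j]
    have hvc : AdjoinRoot.mk φ (vecPoly m c)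
        = ∑ j : Fin m, c j • AdjoinRoot.root φ ^ (j : ℕ) := by
      rw [vecPoly, map_sum]
      refine Finset.sum_congr rfl fun j _ => ?_
      rw [_root_.map_mul, map_pow, AdjoinRoot.mk_X, Algebra.smul_def]
      congr 1
    rw [_root_.map_mul, hvc, Finset.sum_mul]
    exact Finset.sum_congr rfl fun j _ => (smul_mul_assoc _ _ _).symm
  -- rank A = finrank (range T)
  have hrank : A.rank = Module.finrank ℂ (LinearMap.range T) := by
    rw [Matrix.rank, hTdef, LinearMap.range_comp]
    exact (Submodule.equivMapOfInjective en hen_inj _).finrank_eq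
  -- kernel description
  have hker : ∀ c : Fin m → ℂ, c ∈ LinearMap.ker T ↔ ψ ∣ vecPoly m c := by
    intro c
    rw [LinearMap.mem_ker, hT, AdjoinRoot.mk_eq_zero, key]
  have hrn := LinearMap.finrank_range_add_finrank_ker T
  rw [Module.finrank_fin_fun] at hrn
  rcases le_or_gt m s with hms | hms
  · -- kernel is trivial, rank = m
    have hkbot : LinearMap.ker T = ⊥ := by
      rw [Submodule.eq_bot_iff]
      intro c hc
      rw [hker] at hc
      have hvz : vecPoly m c = 0 := by
        by_contra hcne
        have hlt : (vecPoly m c).natDegree < s := by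
          have hm0 : 0 < m := by
            rcases Nat.eq_zero_or_pos m with h | h
            · subst h; exact absurd (by simp [vecPoly]) hcne
            · exact h
          have := vecPoly_natDegree_lt m hm0 c
          omega
        exact hcne (Polynomial.eq_zero_of_dvd_of_natDegree_lt hc hlt)
      have := vecPoly_eq_zero m c hvz
      exact this
    have h1 : Module.finrank ℂ (LinearMap.ker T) = 0 := by
      rw [hkbot]; exact finrank_bot ℂ _
    rw [hrank, min_eq_left hms]
    omega
  · -- kernel has dimension m - s
    set W : (Fin (m - s) → ℂ) →ₗ[ℂ] (Fin m → ℂ) :=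
      (LinearMap.pi fun i : Fin m => Polynomial.lcoeff ℂ (i : ℕ)).comp
        ((LinearMap.mulLeft ℂ ψ).comp (vecPolyₗ (m - s))) with hWdef
    have hW : ∀ (c : Fin (m - s) → ℂ) (i : Fin m),
        W c i = (ψ * vecPoly (m - s) c).coeff (i : ℕ) := fun c i => rfl
    have hWdeg : ∀ c : Fin (m - s) → ℂ, (ψ * vecPoly (m - s) c).natDegree < m := by
      intro c
      by_cases hg : vecPoly (m - s) c = 0
      · rw [hg, mul_zero]; simp only [Polynomial.natDegree_zero]; omega
      · rw [Polynomial.natDegree_mul hψ0 hg]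
        have hm0 : 0 < m - s := by omega
        have := vecPoly_natDegree_lt (m - s) hm0 c
        omega
    have hWinj : LinearMap.ker W = ⊥ := by
      rw [Submodule.eq_bot_iff]
      intro c hc
      rw [LinearMap.mem_ker] at hc
      by_cases hg : vecPoly (m - s) c = 0
      · exact vecPoly_eq_zero _ c hg
      · exfalso
        have hne : ψ * vecPoly (m - s) c ≠ 0 := mul_ne_zero hψ0 hg
        have hlc : (ψ * vecPoly (m - s) c).coeff ((ψ * vecPoly (m - s) c).natDegree) ≠ 0 := by
          rw [← Polynomial.leadingCoeff]
          exact Polynomial.leadingCoeff_ne_zero.mpr hne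
        have hdlt := hWdeg c
        have := congrFun hc (⟨(ψ * vecPoly (m - s) c).natDegree, hdlt⟩ : Fin m)
        rw [hW] at this
        exact hlc this
    have hWrange : LinearMap.range W = LinearMap.ker T := by
      apply le_antisymm
      · rintro x ⟨c, rfl⟩
        rw [hker]
        have hvp : vecPoly m (W c) = ψ * vecPoly (m - s) c := by
          have := vecPoly_of_coeff m (ψ * vecPoly (m - s) c) (hWdeg c)
          rw [← this]
          congr 1
        rw [hvp]
        exact Dvd.intro _ rfl
      · intro c hc
        rw [hker] at hc
        obtain ⟨h, hh⟩ := hc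
        have hhdeg : h.natDegree < m - s := by
          by_cases hh0 : h = 0
          · rw [hh0]; simp only [Polynomial.natDegree_zero]; omega
          · have hne : vecPoly m c ≠ 0 := by
              rw [hh]; exact mul_ne_zero hψ0 hh0
            have h1 : (vecPoly m c).natDegree < m :=
              vecPoly_natDegree_lt m (by omega) c
            rw [hh, Polynomial.natDegree_mul hψ0 hh0] at h1
            omega
        refine ⟨fun j : Fin (m - s) => h.coeff (j : ℕ), ?_⟩
        funext i
        rw [hW, vecPoly_of_coeff (m - s) h hhdeg, ← hh]
        rw [vecPoly_coeff, dif_pos i.isLt, Fin.eta]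
    have hrnW := LinearMap.finrank_range_add_finrank_ker W
    rw [Module.finrank_fin_fun] at hrnW
    have h1 : Module.finrank ℂ (LinearMap.ker W) = 0 := by
      rw [hWinj]; exact finrank_bot ℂ _
    have h2 : Module.finrank ℂ (LinearMap.ker T) = m - s := by
      rw [← hWrange]; omega
    rw [hrank, min_eq_right hms.le]
    omega
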